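/- Let n ≥ 2. The convex hull in ℝ^{n+1} of the 2ⁿ points w(ε) = (ε₁,…,εₙ, max{ε₁,…,εₙ}), ε ∈ {0,1}ⁿ, equals the set Γ = {(x₁,…,xₙ,y) ∈ ℝ^{n+1} : (x₁,…,xₙ) ∈ [0,1]ⁿ and max{x₁,…,xₙ} ≤ y ≤ min(x₁+⋯+xₙ, 1)}. (Sharpness of the Fréchet–Hoeffding bounds S_M ≤ y ≤ S_L for the disjunction of n conditional events.) -/

import Mathlib

private lemma cube_eq_hull (n : ℕ) :
    (Set.pi Set.univ fun _ : Fin n => Set.Icc (0:ℝ) 1) =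
      convexHull ℝ {v : Fin n → ℝ | ∃ ε : Fin n → Bool,
        v = fun i => if ε i then 1 else 0} := by
  have h1 : {v : Fin n → ℝ | ∃ ε : Fin n → Bool, v = fun i => if ε i then 1 else 0}
      = Set.pi Set.univ (fun _ : Fin n => ({0, 1} : Set ℝ)) := by
    ext v
    constructor
    · rintro ⟨ε, rfl⟩ i -
      by_cases h : ε i <;> simp [h]
    · intro h
      refine ⟨fun i => decide (v i = 1), funext fun i => ?_⟩
      rcases h i (Set.mem_univ i) with h0 | h1
      · simp_all
      · simp_all
  rw [h1, convexHull_pi]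
  funext i
  rw [convexHull_pair, segment_eq_Icc zero_le_one]

private lemma gamma_subset_hull : ∀ (n : ℕ) (p : (Fin n → ℝ) × ℝ),
    (∀ i, p.1 i ∈ Set.Icc (0:ℝ) 1) → (∀ i, p.1 i ≤ p.2) → 0 ≤ p.2 →
    p.2 ≤ ∑ i, p.1 i → p.2 ≤ 1 →
    p ∈ convexHull ℝ {q : (Fin n → ℝ) × ℝ | ∃ ε : Fin n → Bool,
        q = (fun i => if ε i then 1 else 0, if ∃ i, ε i then (1 : ℝ) else 0)} := by
  intro n
  induction n with
  | zero =>
    rintro ⟨x, y⟩ hbox hle h0 hsum h1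
    apply subset_convexHull
    refine ⟨fun i => false, ?_⟩
    have hy : y = 0 := le_antisymm (by simpa using hsum) h0
    refine Prod.ext (funext fun i => i.elim0) ?_
    simp [hy]
  | succ n IH =>
    rintro ⟨x, y⟩ hbox hle h0 hsum h1
    simp only at hbox hle hsum h1 h0
    set V : Set ((Fin (n+1) → ℝ) × ℝ) := {q | ∃ ε : Fin (n+1) → Bool,
        q = (fun i => if ε i then 1 else 0, if ∃ i, ε i then (1 : ℝ) else 0)} with hV
    -- snoc arithmetic helpers
    have snoc_add : ∀ (v w : Fin n → ℝ) (rv rw : ℝ),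
        ((Fin.snoc v rv : Fin (n+1) → ℝ) + (Fin.snoc w rw : Fin (n+1) → ℝ)) = Fin.snoc (v + w) (rv + rw) := by
      intro v w rv rw; funext i
      refine Fin.lastCases ?_ (fun j => ?_) i <;> simp
    have snoc_smul : ∀ (cc : ℝ) (v : Fin n → ℝ) (r : ℝ),
        (cc • (Fin.snoc v r : Fin (n+1) → ℝ)) = Fin.snoc (cc • v) (cc * r) := by
      intro cc v r; funext i
      refine Fin.lastCases ?_ (fun j => ?_) i <;> simp
    -- the linear map (v, c) ↦ (snoc v 0, c)
    have hG : ∀ q : (Fin n → ℝ) × ℝ,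
        (∀ i, q.1 i ∈ Set.Icc (0:ℝ) 1) → (∀ i, q.1 i ≤ q.2) → 0 ≤ q.2 →
        q.2 ≤ ∑ i, q.1 i → q.2 ≤ 1 →
        ((Fin.snoc q.1 0 : Fin (n+1) → ℝ), q.2) ∈ convexHull ℝ V := by
      intro q hq1 hq2 hq3 hq4 hq5
      let M : ((Fin n → ℝ) × ℝ) →ₗ[ℝ] (Fin (n+1) → ℝ) × ℝ :=
        { toFun := fun q => ((Fin.snoc q.1 0 : Fin (n+1) → ℝ), q.2)
          map_add' := by
            rintro ⟨v, rv⟩ ⟨w, rw⟩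
            simp only [Prod.mk_add_mk, Prod.fst, Prod.snd]
            rw [Prod.mk.injEq]
            exact ⟨by rw [snoc_add, add_zero], rfl⟩
          map_smul' := by
            rintro cc ⟨v, rv⟩
            simp only [Prod.smul_mk, RingHom.id_apply, Prod.fst, Prod.snd]
            rw [Prod.mk.injEq]
            exact ⟨by rw [snoc_smul, mul_zero], rfl⟩ }
      have hmem := IH q hq1 hq2 hq3 hq4 hq5
      have himg : M q ∈ convexHull ℝ (M '' {q : (Fin n → ℝ) × ℝ | ∃ ε : Fin n → Bool,
          q = (fun i => if ε i then 1 else 0, if ∃ i, ε i then (1 : ℝ) else 0)}) := by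
        rw [← M.image_convexHull]
        exact ⟨q, hmem, rfl⟩
      refine convexHull_mono ?_ himg
      rintro _ ⟨r, ⟨ε, rfl⟩, rfl⟩
      refine ⟨Fin.snoc ε false, ?_⟩
      have hiff : (∃ i : Fin (n+1), (Fin.snoc ε false : Fin (n+1) → Bool) i = true) ↔ (∃ i : Fin n, ε i = true) := by
        constructor
        · rintro ⟨i, hi⟩
          refine Fin.lastCases ?_ (fun j hj => ⟨j, by simpa using hj⟩) i hi
          intro hlast; simp at hlast
        · rintro ⟨j, hj⟩
          exact ⟨j.castSucc, by simpa using hj⟩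
      have h2 : M ((fun i => if ε i then (1:ℝ) else 0), if ∃ i, ε i then (1:ℝ) else 0)
          = ((Fin.snoc (fun i => if ε i then (1:ℝ) else 0) 0 : Fin (n+1) → ℝ),
             if ∃ i, ε i then (1:ℝ) else 0) := rfl
      rw [h2, Prod.mk.injEq]
      constructor
      · funext i
        refine Fin.lastCases ?_ (fun j => ?_) i
        · rw [Fin.snoc_last, Fin.snoc_last]
          simp
        · rw [Fin.snoc_castSucc, Fin.snoc_castSucc]
      · simp only [hiff]
    -- points (snoc a 1, 1) for a in the cube
    have hF : ∀ a : Fin n → ℝ, (∀ i, a i ∈ Set.Icc (0:ℝ) 1) →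
        ((Fin.snoc a 1 : Fin (n+1) → ℝ), (1:ℝ)) ∈ convexHull ℝ V := by
      intro a ha
      let L : (Fin n → ℝ) →ₗ[ℝ] (Fin (n+1) → ℝ) × ℝ :=
        { toFun := fun v => ((Fin.snoc v 0 : Fin (n+1) → ℝ), 0)
          map_add' := by
            intro v w
            rw [Prod.mk_add_mk, Prod.mk.injEq]
            exact ⟨by rw [snoc_add, add_zero], (add_zero 0).symm⟩
          map_smul' := by
            intro cc v
            rw [RingHom.id_apply, Prod.smul_mk, Prod.mk.injEq]
            exact ⟨by rw [snoc_smul, mul_zero], (mul_zero cc).symm⟩ }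
      let φ : (Fin n → ℝ) →ᵃ[ℝ] (Fin (n+1) → ℝ) × ℝ :=
        AffineMap.mk' (fun v => ((Fin.snoc v 1 : Fin (n+1) → ℝ), (1:ℝ))) L 0 (by
          intro p'
          show ((Fin.snoc p' 1 : Fin (n+1) → ℝ), (1:ℝ))
              = ((Fin.snoc (p' - 0) 0 : Fin (n+1) → ℝ), 0) + ((Fin.snoc (0:Fin n → ℝ) 1 : Fin (n+1) → ℝ), 1)
          rw [Prod.mk_add_mk, Prod.mk.injEq, sub_zero, snoc_add, add_zero]
          exact ⟨by rw [zero_add], (zero_add 1).symm⟩)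
      have hmem : a ∈ convexHull ℝ {v : Fin n → ℝ | ∃ ε : Fin n → Bool,
          v = fun i => if ε i then 1 else 0} := by
        rw [← cube_eq_hull]
        exact fun i _ => ha i
      have himg : φ a ∈ convexHull ℝ (φ '' {v : Fin n → ℝ | ∃ ε : Fin n → Bool,
          v = fun i => if ε i then 1 else 0}) := by
        rw [← φ.image_convexHull]
        exact ⟨a, hmem, rfl⟩
      refine convexHull_mono ?_ himg
      rintro _ ⟨v, ⟨ε, rfl⟩, rfl⟩
      refine ⟨Fin.snoc ε true, ?_⟩
      have hex : ∃ i : Fin (n+1), (Fin.snoc ε true : Fin (n+1) → Bool) i = true := ⟨Fin.last n, by simp⟩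
      have h2 : φ (fun i => if ε i then (1:ℝ) else 0)
          = ((Fin.snoc (fun i => if ε i then (1:ℝ) else 0) 1 : Fin (n+1) → ℝ), (1:ℝ)) := rfl
      rw [h2, Prod.mk.injEq]
      constructor
      · funext i
        refine Fin.lastCases ?_ (fun j => ?_) i
        · rw [Fin.snoc_last, Fin.snoc_last]
          simp
        · rw [Fin.snoc_castSucc, Fin.snoc_castSucc]
      · rw [if_pos hex]
    -- main construction
    have ht0 : 0 ≤ x (Fin.last n) := (hbox (Fin.last n)).1
    have ht1 : x (Fin.last n) ≤ 1 := (hbox (Fin.last n)).2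
    have hty : x (Fin.last n) ≤ y := hle (Fin.last n)
    have hsum' : (∑ i : Fin (n+1), x i) = (∑ i : Fin n, x i.castSucc) + x (Fin.last n) :=
      Fin.sum_univ_castSucc x
    rcases eq_or_lt_of_le ht1 with ht1' | ht1'
    · -- x last = 1, hence y = 1
      have hy1 : y = 1 := le_antisymm h1 (by rw [← ht1']; exact hty)
      have hxeq : x = (Fin.snoc (fun i : Fin n => x i.castSucc) 1 : Fin (n+1) → ℝ) := by
        funext i
        refine Fin.lastCases ?_ (fun j => ?_) i
        · rw [Fin.snoc_last]; exact ht1'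
        · rw [Fin.snoc_castSucc]
      have hmem := hF (fun i : Fin n => x i.castSucc) (fun i => hbox i.castSucc)
      rw [show ((x : Fin (n+1) → ℝ), y)
          = ((Fin.snoc (fun i : Fin n => x i.castSucc) 1 : Fin (n+1) → ℝ), (1:ℝ)) from
        Prod.ext hxeq hy1]
      exact hmem
    rcases eq_or_lt_of_le ht0 with ht0' | ht0'
    · -- x last = 0
      have hsumy : y ≤ ∑ i : Fin n, x i.castSucc := by
        rw [hsum'] at hsum; linarith
      have hmem := hG ((fun i : Fin n => x i.castSucc), y) (fun i => hbox i.castSucc)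
        (fun i => hle i.castSucc) h0 hsumy h1
      have hxeq : x = (Fin.snoc (fun i : Fin n => x i.castSucc) 0 : Fin (n+1) → ℝ) := by
        funext i
        refine Fin.lastCases ?_ (fun j => ?_) i
        · rw [Fin.snoc_last]; exact ht0'.symm
        · rw [Fin.snoc_castSucc]
      rw [show ((x : Fin (n+1) → ℝ), y)
          = ((Fin.snoc (fun i : Fin n => x i.castSucc) 0 : Fin (n+1) → ℝ), y) from
        Prod.ext hxeq rfl]
      exact hmem
    · -- 0 < x last < 1 : the genuine convex combination
      obtain ⟨t, htdef⟩ : ∃ t : ℝ, t = x (Fin.last n) := ⟨_, rfl⟩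
      rw [← htdef] at ht0 ht1 hty ht0' ht1' hsum'
      have sub1 : (0:ℝ) < 1 - t := by linarith
      obtain ⟨c, hcdef⟩ : ∃ c : ℝ, c = (y - t) / (1 - t) := ⟨_, rfl⟩
      obtain ⟨b, hbdef⟩ : ∃ b : Fin n → ℝ,
          b = fun i => min (x i.castSucc / (1 - t)) c := ⟨_, rfl⟩
      obtain ⟨a, hadef⟩ : ∃ a : Fin n → ℝ,
          a = fun i => (x i.castSucc - b i * (1 - t)) / t := ⟨_, rfl⟩
      have hc0 : 0 ≤ c := by rw [hcdef]; exact div_nonneg (by linarith) sub1.le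
      have hc1 : c ≤ 1 := by rw [hcdef, div_le_one sub1]; linarith
      have hb0 : ∀ i, 0 ≤ b i := by
        intro i; simp only [hbdef]
        exact le_min (div_nonneg (hbox i.castSucc).1 sub1.le) hc0
      have hbc : ∀ i, b i ≤ c := by
        intro i; simp only [hbdef]; exact min_le_right _ _
      have hb1 : ∀ i, b i ≤ 1 := fun i => (hbc i).trans hc1
      have hbup : ∀ i, b i * (1 - t) ≤ x i.castSucc := by
        intro i
        have h' : b i ≤ x i.castSucc / (1 - t) := by
          simp only [hbdef]; exact min_le_left _ _
        exact (le_div_iff₀ sub1).mp h'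
      have hblow : ∀ i, x i.castSucc - t ≤ b i * (1 - t) := by
        intro i
        have h' : (x i.castSucc - t) / (1 - t) ≤ b i := by
          simp only [hbdef]
          refine le_min ((div_le_div_iff_of_pos_right sub1).mpr (by linarith)) ?_
          rw [hcdef]
          exact (div_le_div_iff_of_pos_right sub1).mpr (by linarith [hle i.castSucc])
        exact (div_le_iff₀ sub1).mp h'
      have ha : ∀ i, a i ∈ Set.Icc (0:ℝ) 1 := by
        intro i
        simp only [hadef, Set.mem_Icc]
        constructor
        · exact div_nonneg (by linarith [hbup i]) ht0
        · rw [div_le_one ht0']; linarith [hblow i]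
      have hcs : c ≤ ∑ i, b i := by
        by_cases hex : ∃ i : Fin n, y - t ≤ x i.castSucc
        · obtain ⟨i0, hi0⟩ := hex
          have hbi0 : b i0 = c := by
            simp only [hbdef]
            refine min_eq_right ?_
            rw [hcdef]
            exact (div_le_div_iff_of_pos_right sub1).mpr (by linarith)
          calc c = b i0 := hbi0.symm
            _ ≤ ∑ i, b i := Finset.single_le_sum (fun i _ => hb0 i) (Finset.mem_univ i0)
        · push_neg at hex
          have hbeq : ∀ i, b i = x i.castSucc / (1 - t) := by
            intro i
            simp only [hbdef]
            refine min_eq_left ?_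
            rw [hcdef]
            exact (div_le_div_iff_of_pos_right sub1).mpr (by linarith [hex i])
          have hsx : y - t ≤ ∑ i : Fin n, x i.castSucc := by
            rw [hsum'] at hsum; linarith
          calc c = (y - t) / (1 - t) := hcdef
            _ ≤ (∑ i : Fin n, x i.castSucc) / (1 - t) := (div_le_div_iff_of_pos_right sub1).mpr hsx
            _ = ∑ i, b i := by
                rw [Finset.sum_div]
                exact Finset.sum_congr rfl (fun i _ => (hbeq i).symm)
      have hGmem := hG (b, c) (fun i => ⟨hb0 i, hb1 i⟩) hbc hc0 hcs hc1
      have hFmem := hF a ha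
      have hcomb := (convex_convexHull ℝ V) hFmem hGmem ht0'.le sub1.le (by ring)
      have heq : ((x : Fin (n+1) → ℝ), y)
          = t • ((Fin.snoc a 1 : Fin (n+1) → ℝ), (1:ℝ))
            + (1 - t) • ((Fin.snoc b 0 : Fin (n+1) → ℝ), c) := by
        rw [Prod.smul_mk, Prod.smul_mk, Prod.mk_add_mk, Prod.mk.injEq]
        constructor
        · rw [snoc_smul, snoc_smul, snoc_add]
          funext i
          refine Fin.lastCases ?_ (fun j => ?_) i
          · rw [Fin.snoc_last, ← htdef]; ring
          · rw [Fin.snoc_castSucc]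
            simp only [Pi.add_apply, Pi.smul_apply, smul_eq_mul, hadef]
            field_simp
            ring
        · rw [hcdef, smul_eq_mul, smul_eq_mul, mul_div_cancel₀ (y - t) sub1.ne']
          ring
      rw [heq]
      exact hcomb

/-- Sharpness of the Fréchet–Hoeffding bounds for the disjunction of n
    conditional events: the convex hull of the 2ⁿ points
    `w(ε) = (ε₁,…,εₙ, max{ε₁,…,εₙ})`, `ε ∈ {0,1}ⁿ`, equals the set Γ of points
    with `(x₁,…,xₙ) ∈ [0,1]ⁿ` and `S_M(x₁,…,xₙ) ≤ y ≤ S_L(x₁,…,xₙ)`. -/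
theorem convexHull_eq_coherent_set_disjunction (n : ℕ) (hn : 2 ≤ n) :
    convexHull ℝ {q : (Fin n → ℝ) × ℝ | ∃ ε : Fin n → Bool,
        q = (fun i => if ε i then 1 else 0, if ∃ i, ε i then (1 : ℝ) else 0)} =
      {p : (Fin n → ℝ) × ℝ | (∀ i, p.1 i ∈ Set.Icc (0 : ℝ) 1) ∧
        (⨆ i, p.1 i) ≤ p.2 ∧ p.2 ≤ min (∑ i, p.1 i) 1} := by
  haveI hne : Nonempty (Fin n) := ⟨⟨0, by omega⟩⟩
  apply Set.Subset.antisymm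
  · apply convexHull_min
    · rintro _ ⟨ε, rfl⟩
      refine ⟨fun i => ?_, ?_, ?_⟩ <;> dsimp only
      · by_cases h : ε i <;> simp [h]
      · refine Real.iSup_le (fun i => ?_) ?_
        · by_cases h : ε i
          · rw [if_pos h, if_pos ⟨i, h⟩]
          · rw [if_neg h]; split_ifs <;> norm_num
        · split_ifs <;> norm_num
      · refine le_min ?_ ?_
        · by_cases hex : ∃ i, ε i
          · obtain ⟨i0, hi0⟩ := hex
            rw [if_pos ⟨i0, hi0⟩]
            calc (1:ℝ) = if ε i0 then 1 else 0 := by rw [if_pos hi0]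
              _ ≤ ∑ i, if ε i then (1:ℝ) else 0 :=
                Finset.single_le_sum (f := fun i => if ε i then (1:ℝ) else 0)
                  (fun i _ => by split_ifs <;> norm_num) (Finset.mem_univ i0)
          · rw [if_neg hex]
            exact Finset.sum_nonneg fun i _ => by split_ifs <;> norm_num
        · split_ifs <;> norm_num
    · -- convexity of Γ
      rintro ⟨x, y⟩ ⟨hbox, hsup, hmin⟩ ⟨x', y'⟩ ⟨hbox', hsup', hmin'⟩ s u hs hu hsu
      simp only at hbox hsup hmin hbox' hsup' hmin'
      have hbdd : BddAbove (Set.range x) := (Set.finite_range x).bddAbove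
      have hbdd' : BddAbove (Set.range x') := (Set.finite_range x').bddAbove
      have hxy : ∀ i, x i ≤ y := fun i => le_trans (le_ciSup hbdd i) hsup
      have hxy' : ∀ i, x' i ≤ y' := fun i => le_trans (le_ciSup hbdd' i) hsup'
      have hy0 : 0 ≤ y := le_trans (hbox (Classical.arbitrary _)).1 (hxy _)
      have hy0' : 0 ≤ y' := le_trans (hbox' (Classical.arbitrary _)).1 (hxy' _)
      obtain ⟨hmin1, hmin2⟩ := le_min_iff.mp hmin
      obtain ⟨hmin1', hmin2'⟩ := le_min_iff.mp hmin'
      simp only [Prod.smul_mk, Prod.mk_add_mk, smul_eq_mul, Set.mem_setOf_eq]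
      refine ⟨fun i => ?_, ?_, ?_⟩
      · simp only [Pi.add_apply, Pi.smul_apply, smul_eq_mul, Set.mem_Icc]
        constructor
        · have h1 := (hbox i).1; have h2 := (hbox' i).1
          positivity
        · nlinarith [(hbox i).2, (hbox' i).2]
      · refine Real.iSup_le (fun i => ?_) (by positivity)
        simp only [Pi.add_apply, Pi.smul_apply, smul_eq_mul]
        nlinarith [hxy i, hxy' i]
      · refine le_min ?_ ?_
        · simp only [Pi.add_apply, Pi.smul_apply, smul_eq_mul,
            Finset.sum_add_distrib, ← Finset.mul_sum]
          nlinarith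
        · nlinarith
  · rintro p ⟨hbox, hsup, hmin⟩
    have hbdd : BddAbove (Set.range p.1) := (Set.finite_range p.1).bddAbove
    have hxy : ∀ i, p.1 i ≤ p.2 := fun i => le_trans (le_ciSup hbdd i) hsup
    obtain ⟨hmin1, hmin2⟩ := le_min_iff.mp hmin
    exact gamma_subset_hull n p hbox hxy
      (le_trans (hbox (Classical.arbitrary _)).1 (hxy _)) hmin1 hmin2
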